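/- Let R_cl be the unital C*-subalgebra of bounded continuous functions on ℝ^d generated by the functions x ↦ (λ − i·⟨x, a⟩)^(−1) for λ ∈ ℝ \ {0} and a ∈ ℝ^d, a ≠ 0. Then C₀(ℝ^d) ⊆ R_cl. -/

import Mathlib

open Complex BoundedContinuousFunction Filter Topology OnePoint

namespace ResolventSW

variable {d : ℕ}

lemma denom_ne_zero {lam : ℝ} (hlam : lam ≠ 0) (t : ℝ) :
    (lam : ℂ) - Complex.I * (t : ℂ) ≠ 0 := by
  intro h
  have := congrArg Complex.re h
  simp at this
  exact hlam this

lemma norm_denom_inv_le {lam : ℝ} (hlam : lam ≠ 0) (t : ℝ) :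
    ‖((lam : ℂ) - Complex.I * (t : ℂ))⁻¹‖ ≤ |lam|⁻¹ := by
  rw [norm_inv]
  refine inv_anti₀ (abs_pos.mpr hlam) ?_
  calc |lam| = |((lam : ℂ) - Complex.I * (t : ℂ)).re| := by simp
    _ ≤ ‖(lam : ℂ) - Complex.I * (t : ℂ)‖ := Complex.abs_re_le_norm _

lemma norm_denom_inv_le_one (t : ℝ) :
    ‖((1 : ℂ) - Complex.I * (t : ℂ))⁻¹‖ ≤ 1 := by
  simpa using norm_denom_inv_le one_ne_zero t

lemma norm_denom_inv_le_im (t : ℝ) (ht : t ≠ 0) :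
    ‖((1 : ℂ) - Complex.I * (t : ℂ))⁻¹‖ ≤ |t|⁻¹ := by
  rw [norm_inv]
  refine inv_anti₀ (abs_pos.mpr ht) ?_
  calc |t| = |((1 : ℂ) - Complex.I * (t : ℂ)).im| := by simp
    _ ≤ ‖(1 : ℂ) - Complex.I * (t : ℂ)‖ := Complex.abs_im_le_norm _

/-- The resolvent function as a bounded continuous function. -/
noncomputable def res (lam : ℝ) (hlam : lam ≠ 0) (a : EuclideanSpace ℝ (Fin d)) :
    BoundedContinuousFunction (EuclideanSpace ℝ (Fin d)) ℂ :=
  BoundedContinuousFunction.ofNormedAddCommGroup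
    (fun x => ((lam : ℂ) - Complex.I * ((inner ℝ x a : ℝ) : ℂ))⁻¹)
    (Continuous.inv₀
      (continuous_const.sub (continuous_const.mul
        (Complex.continuous_ofReal.comp (continuous_id.inner continuous_const))))
      (fun _ => denom_ne_zero hlam _))
    |lam|⁻¹ (fun _ => norm_denom_inv_le hlam _)

@[simp] lemma res_apply (lam : ℝ) (hlam : lam ≠ 0) (a x : EuclideanSpace ℝ (Fin d)) :
    res lam hlam a x = ((lam : ℂ) - Complex.I * ((inner ℝ x a : ℝ) : ℂ))⁻¹ := rfl

lemma coe_prod {ι : Type*} (s : Finset ι)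
    (F : ι → BoundedContinuousFunction (EuclideanSpace ℝ (Fin d)) ℂ)
    (x : EuclideanSpace ℝ (Fin d)) :
    (∏ i ∈ s, F i) x = ∏ i ∈ s, F i x := by
  induction s using Finset.cons_induction with
  | empty => simp
  | cons a s ha ih => simp [Finset.prod_cons, ih]

lemma inner_single (i : Fin d) (x : EuclideanSpace ℝ (Fin d)) :
    (inner ℝ x (EuclideanSpace.single i (1:ℝ)) : ℝ) = x i := by
  simpa using EuclideanSpace.inner_single_right (𝕜 := ℝ) i 1 x

lemma single_ne_zero (i : Fin d) : (EuclideanSpace.single i (1:ℝ)) ≠ 0 := by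
  intro h
  have := congrArg (fun v : EuclideanSpace ℝ (Fin d) => v i) h
  simp [EuclideanSpace.single_apply] at this

lemma exists_big (hd : 0 < d) (x : EuclideanSpace ℝ (Fin d)) :
    ∃ j, ‖x‖ ≤ Real.sqrt d * |x j| := by
  have hne : (Finset.univ : Finset (Fin d)).Nonempty := ⟨⟨0, hd⟩, Finset.mem_univ _⟩
  obtain ⟨j, -, hj⟩ := Finset.exists_max_image Finset.univ (fun i => |x i|) hne
  refine ⟨j, ?_⟩
  have h1 : ‖x‖ ^ 2 ≤ d * |x j| ^ 2 := by
    rw [EuclideanSpace.norm_eq, Real.sq_sqrt (by positivity)]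
    calc ∑ i, ‖x i‖ ^ 2 ≤ ∑ _i : Fin d, |x j| ^ 2 := by
          refine Finset.sum_le_sum fun i _ => ?_
          have := hj i (Finset.mem_univ i)
          simpa [Real.norm_eq_abs] using pow_le_pow_left₀ (abs_nonneg _) this 2
      _ = d * |x j| ^ 2 := by simp [Finset.sum_const, nsmul_eq_mul]
  have h2 : ‖x‖ ≤ Real.sqrt (d * |x j| ^ 2) := by
    rw [← Real.sqrt_sq (norm_nonneg x)]
    exact Real.sqrt_le_sqrt h1
  calc ‖x‖ ≤ Real.sqrt (d * |x j| ^ 2) := h2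
    _ = Real.sqrt d * |x j| := by
        rw [Real.sqrt_mul (by positivity), Real.sqrt_sq (abs_nonneg _)]

/-- The product of the basis resolvents. -/
noncomputable def gB (d : ℕ) : BoundedContinuousFunction (EuclideanSpace ℝ (Fin d)) ℂ :=
  ∏ i : Fin d, res 1 one_ne_zero (EuclideanSpace.single i (1:ℝ))

lemma gB_apply (x : EuclideanSpace ℝ (Fin d)) :
    gB d x = ∏ i : Fin d, ((1 : ℂ) - Complex.I * ((x i : ℝ) : ℂ))⁻¹ := by
  rw [gB, coe_prod]
  refine Finset.prod_congr rfl fun i _ => ?_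
  rw [res_apply, inner_single]
  norm_num

lemma gB_ne_zero (x : EuclideanSpace ℝ (Fin d)) : gB d x ≠ 0 := by
  rw [gB_apply]
  exact Finset.prod_ne_zero_iff.mpr fun i _ =>
    inv_ne_zero (denom_ne_zero one_ne_zero _)

lemma norm_gB_le (hd : 0 < d) (x : EuclideanSpace ℝ (Fin d)) (hx : x ≠ 0) :
    ‖gB d x‖ ≤ Real.sqrt d * ‖x‖⁻¹ := by
  obtain ⟨j, hj⟩ := exists_big hd x
  have hxpos : 0 < ‖x‖ := norm_pos_iff.mpr hx
  have hsd : 0 < Real.sqrt d := Real.sqrt_pos.mpr (by exact_mod_cast hd)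
  have hxj : x j ≠ 0 := by
    intro h
    rw [h] at hj
    simp at hj
    exact hx hj
  have step1 : ‖gB d x‖ ≤ ‖((1 : ℂ) - Complex.I * ((x j : ℝ) : ℂ))⁻¹‖ := by
    rw [gB_apply, norm_prod]
    rw [← Finset.mul_prod_erase Finset.univ
      (fun i => ‖((1 : ℂ) - Complex.I * ((x i : ℝ) : ℂ))⁻¹‖) (Finset.mem_univ j)]
    have hrest : ∏ i ∈ Finset.univ.erase j,
        ‖((1 : ℂ) - Complex.I * ((x i : ℝ) : ℂ))⁻¹‖ ≤ 1 :=
      Finset.prod_le_one (fun i _ => norm_nonneg _) (fun i _ => norm_denom_inv_le_one _)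
    calc ‖((1:ℂ) - Complex.I * ((x j : ℝ):ℂ))⁻¹‖ * ∏ i ∈ Finset.univ.erase j,
          ‖((1 : ℂ) - Complex.I * ((x i : ℝ) : ℂ))⁻¹‖
        ≤ ‖((1:ℂ) - Complex.I * ((x j : ℝ):ℂ))⁻¹‖ * 1 :=
          mul_le_mul_of_nonneg_left hrest (norm_nonneg _)
      _ = ‖((1:ℂ) - Complex.I * ((x j : ℝ):ℂ))⁻¹‖ := mul_one _
  have step2 : ‖((1 : ℂ) - Complex.I * ((x j : ℝ) : ℂ))⁻¹‖ ≤ |x j|⁻¹ :=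
    norm_denom_inv_le_im _ hxj
  have step3 : |x j|⁻¹ ≤ Real.sqrt d * ‖x‖⁻¹ := by
    have h4 : ‖x‖ / Real.sqrt d ≤ |x j| := (div_le_iff₀ hsd).mpr (by linarith [hj])
    calc |x j|⁻¹ ≤ (‖x‖ / Real.sqrt d)⁻¹ := inv_anti₀ (by positivity) h4
      _ = Real.sqrt d * ‖x‖⁻¹ := by rw [inv_div, div_eq_mul_inv]
  exact step1.trans (step2.trans step3)

lemma gB_tendsto (hd : 0 < d) :
    Tendsto (gB d) (cocompact (EuclideanSpace ℝ (Fin d))) (𝓝 0) := by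
  have hlim : Tendsto (fun x : EuclideanSpace ℝ (Fin d) => Real.sqrt d * ‖x‖⁻¹)
      (cocompact _) (𝓝 0) := by
    have h1 : Tendsto (fun x : EuclideanSpace ℝ (Fin d) => ‖x‖⁻¹) (cocompact _) (𝓝 0) :=
      tendsto_norm_cocompact_atTop.inv_tendsto_atTop
    simpa using h1.const_mul (Real.sqrt d)
  refine squeeze_zero_norm' ?_ hlim
  filter_upwards [tendsto_norm_cocompact_atTop.eventually_ge_atTop 1] with x hx
  exact norm_gB_le hd x (by intro h; rw [h] at hx; simp at hx; linarith)

/-- Restriction from the one-point compactification, as a star algebra homomorphism. -/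
noncomputable def Phi (d : ℕ) : C(OnePoint (EuclideanSpace ℝ (Fin d)), ℂ) →⋆ₐ[ℂ]
    BoundedContinuousFunction (EuclideanSpace ℝ (Fin d)) ℂ where
  toFun b := (mkOfCompact b).compContinuous ⟨OnePoint.some, OnePoint.continuous_coe⟩
  map_one' := by ext x; simp
  map_mul' b c := by ext x; simp
  map_zero' := by ext x; simp
  map_add' b c := by ext x; simp
  commutes' c := by ext x; simp [Algebra.algebraMap_eq_smul_one]
  map_star' b := by ext x; simp

@[simp] lemma Phi_apply (b : C(OnePoint (EuclideanSpace ℝ (Fin d)), ℂ))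
    (x : EuclideanSpace ℝ (Fin d)) : Phi d b x = b x := rfl

lemma Phi_continuous : Continuous (Phi d) := by
  refine AddMonoidHomClass.continuous_of_bound (Phi d) 1 fun b => ?_
  rw [one_mul, ← BoundedContinuousFunction.norm_mkOfCompact b]
  exact norm_compContinuous_le _ _

/-- Extension of a function vanishing at infinity to the one-point compactification. -/
noncomputable def extMap (h : BoundedContinuousFunction (EuclideanSpace ℝ (Fin d)) ℂ)
    (hz : Tendsto h (cocompact _) (𝓝 0)) : C(OnePoint (EuclideanSpace ℝ (Fin d)), ℂ) :=
  OnePoint.continuousMapMk h.toContinuousMap 0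
    (by rwa [Filter.coclosedCompact_eq_cocompact])

@[simp] lemma extMap_coe (h : BoundedContinuousFunction (EuclideanSpace ℝ (Fin d)) ℂ)
    (hz : Tendsto h (cocompact _) (𝓝 0)) (x : EuclideanSpace ℝ (Fin d)) :
    extMap h hz x = h x := rfl

@[simp] lemma extMap_infty (h : BoundedContinuousFunction (EuclideanSpace ℝ (Fin d)) ℂ)
    (hz : Tendsto h (cocompact _) (𝓝 0)) : extMap h hz ∞ = 0 := rfl

lemma Phi_extMap (h : BoundedContinuousFunction (EuclideanSpace ℝ (Fin d)) ℂ)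
    (hz : Tendsto h (cocompact _) (𝓝 0)) : Phi d (extMap h hz) = h := by
  ext x; rfl


lemma res_bound_one (a z : EuclideanSpace ℝ (Fin d)) :
    ‖res 1 one_ne_zero a z‖ ≤ 1 := by
  rw [res_apply]
  simpa using norm_denom_inv_le one_ne_zero (inner ℝ z a : ℝ)

lemma gB_mul_tendsto (hd : 0 < d) (a : EuclideanSpace ℝ (Fin d)) :
    Tendsto (⇑(gB d * res 1 one_ne_zero a)) (cocompact (EuclideanSpace ℝ (Fin d))) (𝓝 0) := by
  refine squeeze_zero_norm (fun z => ?_) (by simpa using (gB_tendsto hd).norm)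
  calc ‖(gB d * res 1 one_ne_zero a) z‖ = ‖gB d z‖ * ‖res 1 one_ne_zero a z‖ := by
        rw [BoundedContinuousFunction.coe_mul]; exact norm_mul _ _
    _ ≤ ‖gB d z‖ * 1 := mul_le_mul_of_nonneg_left (res_bound_one a z) (norm_nonneg _)
    _ = ‖gB d z‖ := mul_one _

lemma res_sep (x y : EuclideanSpace ℝ (Fin d)) (hxy0 : x ≠ y) (ha : x - y ≠ 0) :
    res 1 one_ne_zero (x - y) x ≠ res 1 one_ne_zero (x - y) y := by
  have hinner : (inner ℝ x (x - y) : ℝ) ≠ inner ℝ y (x - y) := by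
    intro h
    exact (inner_self_ne_zero (𝕜 := ℝ)).mpr ha (by rw [inner_sub_left, h, sub_self])
  simp only [res_apply]
  intro h
  have h2 := inv_injective h
  have h3 := sub_right_injective h2
  have h4 := mul_left_cancel₀ Complex.I_ne_zero h3
  exact hinner (Complex.ofReal_inj.mp h4)

lemma sep_main (hd : 0 < d) (A : StarSubalgebra ℂ
      (BoundedContinuousFunction (EuclideanSpace ℝ (Fin d)) ℂ))
    (hgB_mem : gB d ∈ A)
    (hres_mem : ∀ a : EuclideanSpace ℝ (Fin d), a ≠ 0 → res 1 one_ne_zero a ∈ A) :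
    ((A.topologicalClosure).comap (Phi d)).SeparatesPoints := by
  have hgz := gB_tendsto (d := d) hd
  have hmemB : ∀ (h : BoundedContinuousFunction (EuclideanSpace ℝ (Fin d)) ℂ)
      (hz : Tendsto h (cocompact _) (𝓝 0)), h ∈ A →
      extMap h hz ∈ (A.topologicalClosure).comap (Phi d) := by
    intro h hz hmem
    rw [StarSubalgebra.mem_comap, Phi_extMap]
    exact A.le_topologicalClosure hmem
  intro p q hpq
  induction p using OnePoint.rec with
  | infty =>
    induction q using OnePoint.rec with
    | infty => exact absurd rfl hpq
    | coe y =>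
      refine ⟨_, ⟨extMap (gB d) hgz, hmemB _ hgz hgB_mem, rfl⟩, ?_⟩
      simpa using (gB_ne_zero y).symm
  | coe x =>
    induction q using OnePoint.rec with
    | infty =>
      refine ⟨_, ⟨extMap (gB d) hgz, hmemB _ hgz hgB_mem, rfl⟩, ?_⟩
      simpa using gB_ne_zero x
    | coe y =>
      have hxy0 : x ≠ y := fun h => hpq (by rw [h])
      have ha : x - y ≠ 0 := sub_ne_zero.mpr hxy0
      have hrxy := res_sep x y hxy0 ha
      by_cases hg : gB d x = gB d y
      · have hz2 := gB_mul_tendsto hd (x - y)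
        have hmul_mem : gB d * res 1 one_ne_zero (x - y) ∈ A :=
          mul_mem hgB_mem (hres_mem _ ha)
        refine ⟨_, ⟨extMap (gB d * res 1 one_ne_zero (x - y)) hz2,
          hmemB _ hz2 hmul_mem, rfl⟩, ?_⟩
        simp only [extMap_coe, BoundedContinuousFunction.coe_mul, Pi.mul_apply]
        rw [hg]
        exact fun heq => hrxy (mul_left_cancel₀ (gB_ne_zero y) heq)
      · refine ⟨_, ⟨extMap (gB d) hgz, hmemB _ hgz hgB_mem, rfl⟩, ?_⟩
        simpa using hg

lemma main_pos (hd : 0 < d) (A : StarSubalgebra ℂ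
      (BoundedContinuousFunction (EuclideanSpace ℝ (Fin d)) ℂ))
    (hgB_mem : gB d ∈ A)
    (hres_mem : ∀ a : EuclideanSpace ℝ (Fin d), a ≠ 0 → res 1 one_ne_zero a ∈ A)
    (h : BoundedContinuousFunction (EuclideanSpace ℝ (Fin d)) ℂ)
    (hz : Tendsto h (cocompact _) (𝓝 0)) :
    h ∈ A.topologicalClosure := by
  haveI : T4Space (OnePoint (EuclideanSpace ℝ (Fin d))) := ⟨⟩
  have hsep := sep_main hd A hgB_mem hres_mem
  have hSW := ContinuousMap.starSubalgebra_topologicalClosure_eq_top_of_separatesPoints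
    ((A.topologicalClosure).comap (Phi d)) hsep
  have hBclosed : IsClosed (((A.topologicalClosure).comap (Phi d) :
      Set C(OnePoint (EuclideanSpace ℝ (Fin d)), ℂ))) := by
    have h1 : (((A.topologicalClosure).comap (Phi d)) :
        Set C(OnePoint (EuclideanSpace ℝ (Fin d)), ℂ)) =
        (Phi d) ⁻¹' (A.topologicalClosure : Set _) := rfl
    rw [h1]
    exact (StarSubalgebra.isClosed_topologicalClosure _).preimage Phi_continuous
  have hwf : extMap h hz ∈ (A.topologicalClosure).comap (Phi d) := by
    have h1 : extMap h hz ∈ ((A.topologicalClosure).comap (Phi d)).topologicalClosure := by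
      rw [hSW]; exact StarSubalgebra.mem_top
    have h2 : extMap h hz ∈ closure (((A.topologicalClosure).comap (Phi d)) : Set _) := h1
    rwa [hBclosed.closure_eq] at h2
  have h3 := (StarSubalgebra.mem_comap _ _ _).mp hwf
  rwa [Phi_extMap] at h3

end ResolventSW

open ResolventSW in
/-- `C₀(ℝ^d)` is contained in the unital C*-subalgebra of bounded continuous functions
on `ℝ^d` generated by the resolvent functions `x ↦ (λ − i⟨x,a⟩)⁻¹`, `λ ∈ ℝ \ {0}`,
`a ∈ ℝ^d \ {0}`. -/
theorem zeroAtInfty_subset_classical_resolvent_algebra (d : ℕ)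
    (S : Set (BoundedContinuousFunction (EuclideanSpace ℝ (Fin d)) ℂ))
    (hS : S = {g | ∃ (lam : ℝ) (a : EuclideanSpace ℝ (Fin d)), lam ≠ 0 ∧ a ≠ 0 ∧
      ∀ x, g x = ((lam : ℂ) - Complex.I * ((inner ℝ x a : ℝ) : ℂ))⁻¹})
    (f : ZeroAtInftyContinuousMap (EuclideanSpace ℝ (Fin d)) ℂ) :
    f.toBCF ∈ (StarAlgebra.adjoin ℂ S).topologicalClosure := by
  classical
  rcases Nat.eq_zero_or_pos d with hd | hd
  · subst hd
    have hfc : f.toBCF = algebraMap ℂ _ (f 0) := by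
      ext x
      have : x = 0 := Subsingleton.elim x 0
      subst this
      simp [Algebra.algebraMap_eq_smul_one]
    rw [hfc]
    exact StarSubalgebra.algebraMap_mem _ _
  have hres_mem : ∀ a : EuclideanSpace ℝ (Fin d), a ≠ 0 →
      res 1 one_ne_zero a ∈ StarAlgebra.adjoin ℂ S := by
    intro a ha
    refine StarAlgebra.subset_adjoin ℂ S ?_
    rw [hS]
    exact ⟨1, a, one_ne_zero, ha, fun x => rfl⟩
  have hgB_mem : gB d ∈ StarAlgebra.adjoin ℂ S :=
    prod_mem fun i _ => hres_mem _ (single_ne_zero i)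
  have hzf : Tendsto f.toBCF (cocompact _) (𝓝 0) := by
    have := f.zero_at_infty'
    exact this
  exact main_pos hd _ hgB_mem hres_mem f.toBCF hzf
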